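/- Let G be a finite simple graph that is C_3-free and C_5-free. Then for every vertex x of G, the subgraph of G induced by N²[x] (the set of vertices at distance at most 2 from x) is bipartite, i.e., 2-colorable. -/

import Mathlib

open Set SimpleGraph

variable {V : Type*}

/-- The closed neighborhood `N[v]` of a vertex. -/
def closedNbr (G : SimpleGraph V) (v : V) : Set V := insert v (G.neighborSet v)

/-- Private neighbors of `x` with respect to `I`. -/
def privSet (G : SimpleGraph V) (x : V) (I : Set V) : Set V :=
  {y ∈ closedNbr G x | closedNbr G y ∩ I = {x}}

/-- A set is irredundant if every element has a private neighbor. -/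
def Irred (G : SimpleGraph V) (I : Set V) : Prop := ∀ x ∈ I, (privSet G x I).Nonempty

/-- A maximal irredundant set. -/
def MaxIrred (G : SimpleGraph V) (I : Set V) : Prop :=
  Irred G I ∧ ∀ J : Set V, Irred G J → I ⊆ J → J = I

def Redundant (G : SimpleGraph V) (R : Set V) : Prop := ¬ Irred G R

def MinRedundant (G : SimpleGraph V) (R : Set V) : Prop :=
  Redundant G R ∧ ∀ S : Set V, S ⊂ R → ¬ Redundant G S

/-- The set of redundant vertices of a set. -/
def redVerts (G : SimpleGraph V) (R : Set V) : Set V := {x ∈ R | privSet G x R = ∅}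

def Dominating (G : SimpleGraph V) (D : Set V) : Prop := ∀ v : V, ∃ d ∈ D, v ∈ closedNbr G d

def MinDominating (G : SimpleGraph V) (D : Set V) : Prop :=
  Dominating G D ∧ ∀ S : Set V, S ⊂ D → ¬ Dominating G S

/-- Vertices at distance at most 2 from `x`. -/
def ball2 (G : SimpleGraph V) (x : V) : Set V :=
  {y | y = x ∨ G.Adj x y ∨ ∃ w, G.Adj x w ∧ G.Adj w y}

/-- Vertices at distance exactly 2 from `x`. -/
def sphere2 (G : SimpleGraph V) (x : V) : Set V :=
  {y | y ≠ x ∧ ¬ G.Adj x y ∧ ∃ w, G.Adj x w ∧ G.Adj w y}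

/-- `G` contains no induced cycle of length `k`. -/
def CFree (G : SimpleGraph V) (k : ℕ) : Prop :=
  IsEmpty (SimpleGraph.cycleGraph k ↪g G)

/-- `S` dominates `B` through open neighborhoods. -/
def DomOver (G : SimpleGraph V) (S B : Set V) : Prop := ∀ b ∈ B, ∃ s ∈ S, G.Adj s b

def MinDomOver (G : SimpleGraph V) (S B : Set V) : Prop :=
  DomOver G S B ∧ ∀ S' : Set V, S' ⊂ S → ¬ DomOver G S' B

/-- `N(Y)`, the union of open neighborhoods of elements of `Y`. -/
def nbrUnion (G : SimpleGraph V) (Y : Set V) : Set V := ⋃ y ∈ Y, G.neighborSet y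

/-- Private edges of `x` with respect to `I` in a hypergraph. -/
def hypPriv (H : Set (Set V)) (x : V) (I : Set V) : Set (Set V) := {E ∈ H | E ∩ I = {x}}

def HypIrred (H : Set (Set V)) (I : Set V) : Prop := ∀ x ∈ I, (hypPriv H x I).Nonempty

def HypMaxIrred (H : Set (Set V)) (I : Set V) : Prop :=
  HypIrred H I ∧ ∀ J : Set V, HypIrred H J → I ⊆ J → J = I

/-- The trace of a hypergraph on a set `S`. -/
def htrace (H : Set (Set V)) (S : Set V) : Set (Set V) :=
  {F | ∃ E ∈ H, F = E ∩ S ∧ (E ∩ S).Nonempty}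

/-- The closed-neighborhood hypergraph of a graph. -/
def nbrHyp (G : SimpleGraph V) : Set (Set V) := Set.range (closedNbr G)

/-- The first `i` vertices in the ordering `v` (zero-based: `v 0, …, v (i-1)`). -/
def firstVerts (v : ℕ → V) (i : ℕ) : Set V := {x | ∃ j < i, v j = x}

/-- The incidence co-bipartite graph of the closed-neighborhood hypergraph of `G`:
`Sum.inl` is the vertex side `V`, `Sum.inr` is the copy `U`. -/
def cobip (G : SimpleGraph V) : SimpleGraph (V ⊕ V) :=
  SimpleGraph.fromRel (fun a b => match a, b with
    | Sum.inl _, Sum.inl _ => True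
    | Sum.inr _, Sum.inr _ => True
    | Sum.inl a, Sum.inr b => a = b ∨ G.Adj a b
    | Sum.inr _, Sum.inl _ => False)


lemma triangle_emb (G : SimpleGraph V) {a b c : V} (hab : G.Adj a b) (hbc : G.Adj b c)
    (hac : G.Adj a c) : Nonempty (SimpleGraph.cycleGraph 3 ↪g G) := by
  have h1 := G.ne_of_adj hab
  have h2 := G.ne_of_adj hbc
  have h3 := G.ne_of_adj hac
  refine ⟨⟨⟨![a,b,c], ?_⟩, ?_⟩⟩
  · intro i j hij
    fin_cases i <;> fin_cases j <;> simp_all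
  · intro i j
    show G.Adj (![a,b,c] i) (![a,b,c] j) ↔ _
    fin_cases i <;> fin_cases j <;>
      simp [cycleGraph_adj, hab, hbc, hac, hab.symm, hbc.symm, hac.symm, G.irrefl] <;> decide

lemma c5_emb (G : SimpleGraph V) {a b c d e : V}
    (h1 : G.Adj a b) (h2 : G.Adj b c) (h3 : G.Adj c d) (h4 : G.Adj d e) (h5 : G.Adj e a)
    (n1 : ¬ G.Adj a c) (n2 : ¬ G.Adj a d) (n3 : ¬ G.Adj b d) (n4 : ¬ G.Adj b e)
    (n5 : ¬ G.Adj c e) : Nonempty (SimpleGraph.cycleGraph 5 ↪g G) := by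
  have e1 := G.ne_of_adj h1
  have e2 := G.ne_of_adj h2
  have e3 := G.ne_of_adj h3
  have e4 := G.ne_of_adj h4
  have e5 := (G.ne_of_adj h5).symm
  have hac : a ≠ c := fun h => n2 (h ▸ h3)
  have had : a ≠ d := fun h => n1 (h.symm ▸ h3.symm)
  have hbd : b ≠ d := fun h => n4 (h ▸ h4)
  have hbe : b ≠ e := fun h => n3 (h ▸ h4.symm)
  have hce : c ≠ e := fun h => n4 (h ▸ h2)
  have m1 : ¬ G.Adj c a := fun h => n1 h.symm
  have m2 : ¬ G.Adj d a := fun h => n2 h.symm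
  have m3 : ¬ G.Adj d b := fun h => n3 h.symm
  have m4 : ¬ G.Adj e b := fun h => n4 h.symm
  have m5 : ¬ G.Adj e c := fun h => n5 h.symm
  refine ⟨⟨⟨![a,b,c,d,e], ?_⟩, ?_⟩⟩
  · intro i j hij
    fin_cases i <;> fin_cases j <;> simp_all
  · intro i j
    show G.Adj (![a,b,c,d,e] i) (![a,b,c,d,e] j) ↔ _
    fin_cases i <;> fin_cases j <;>
      simp [cycleGraph_adj, h1, h2, h3, h4, h5, h1.symm, h2.symm, h3.symm, h4.symm, h5.symm,
        n1, n2, n3, n4, n5, m1, m2, m3, m4, m5, G.irrefl] <;> decide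

/-- in a `(C₃, C₅)`-free graph, the subgraph induced by the ball of radius 2
around any vertex is bipartite (2-colorable). -/
theorem stmt6 [Fintype V] (G : SimpleGraph V) (h3 : CFree G 3) (h5 : CFree G 5)
    (x : V) :
    (G.induce (ball2 G x)).Colorable 2 := by
  have tri : ∀ {a b c : V}, G.Adj a b → G.Adj b c → G.Adj a c → False :=
    fun hab hbc hac => (triangle_emb G hab hbc hac).elim h3.false
  classical
  refine ⟨⟨fun v => if G.Adj x v.1 then 1 else 0, ?_⟩⟩
  rintro ⟨u, hu⟩ ⟨v, hv⟩ huv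
  have huv : G.Adj u v := huv
  by_cases hxu : G.Adj x u <;> by_cases hxv : G.Adj x v
  · exact absurd hxv (fun h => tri hxu huv h)
  · show (if G.Adj x u then (1:Fin 2) else 0) ≠ (if G.Adj x v then 1 else 0)
    simp [hxu, hxv]
  · show (if G.Adj x u then (1:Fin 2) else 0) ≠ (if G.Adj x v then 1 else 0)
    simp [hxu, hxv]
  · exfalso
    have hux : u ≠ x := fun h => hxv (h ▸ huv)
    have hvx : v ≠ x := fun h => hxu (h ▸ huv.symm)
    obtain ⟨p, hxp, hpu⟩ : ∃ w, G.Adj x w ∧ G.Adj w u := by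
      rcases hu with h | h | h
      · exact absurd h hux
      · exact absurd h hxu
      · exact h
    obtain ⟨q, hxq, hqv⟩ : ∃ w, G.Adj x w ∧ G.Adj w v := by
      rcases hv with h | h | h
      · exact absurd h hvx
      · exact absurd h hxv
      · exact h
    by_cases hpq : p = q
    · exact tri hpu huv (hpq ▸ hqv)
    · refine (c5_emb G hxp hpu huv hqv.symm hxq.symm hxu hxv ?_ ?_ ?_).elim h5.false
      · exact fun h => tri hpu huv h
      · exact fun h => tri hxp h hxq
      · exact fun h => tri huv hqv.symm h
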